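/- If A ∈ Mat_{n×n}(ℝ) is skew-symmetric and q ∈ ℝ^n is a formal equilibrium of (n̲,A), then the function H(x) = Σ_{i=1}^n q_i log x_i is a constant of motion for the polymatrix replicator in the interior of the phase space: for every x ∈ Γ°_n̲, Σ_{i=1}^n (q_i/x_i) · X_{(n̲,A)}(x)_i = 0, i.e. the derivative of H along the vector field X_{(n̲,A)} vanishes on Γ°_n̲. -/

import Mathlib

open Matrix

/-- Index set of a polymatrix game with signature `n : Fin p → ℕ`:
`i = ⟨α, k⟩` is the `k`-th strategy of group `α`. -/
abbrev Idx (p : ℕ) (n : Fin p → ℕ) : Type := (α : Fin p) × Fin (n α)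

noncomputable section

/-- The polymatrix replicator vector field `X_{(n̲,A)}`; note that
`Σ_β (x^α)ᵗ A^{α,β} x^β = Σ_{k ∈ α} x_k (Ax)_k`. -/
def replicator {p : ℕ} {n : Fin p → ℕ} (A : Matrix (Idx p n) (Idx p n) ℝ)
    (x : Idx p n → ℝ) (i : Idx p n) : ℝ :=
  x i * (A.mulVec x i - ∑ k : Fin (n i.1), x ⟨i.1, k⟩ * A.mulVec x ⟨i.1, k⟩)

/-- The polytope `Γ_n̲` (product of simplexes). -/
def Gamma (p : ℕ) (n : Fin p → ℕ) : Set (Idx p n → ℝ) :=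
  {x | (∀ i, 0 ≤ x i) ∧ ∀ α : Fin p, ∑ k : Fin (n α), x ⟨α, k⟩ = 1}

/-- The relative interior `Γ°_n̲`. -/
def GammaInt (p : ℕ) (n : Fin p → ℕ) : Set (Idx p n → ℝ) :=
  {x | (∀ i, 0 < x i) ∧ ∀ α : Fin p, ∑ k : Fin (n α), x ⟨α, k⟩ = 1}

/-- The block diagonal matrix `T_x = diag(T^1_x,…,T^p_x)`, `T^α_x = x^α 𝟙ᵗ - I`. -/
def Tmat {p : ℕ} {n : Fin p → ℕ} (x : Idx p n → ℝ) : Matrix (Idx p n) (Idx p n) ℝ :=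
  fun i j => (if i.1 = j.1 then x i else 0) - (if i = j then 1 else 0)

/-- The bivector `π_A(x) = - T_x D_x A D_x T_xᵀ`. -/
def piA {p : ℕ} {n : Fin p → ℕ} (A : Matrix (Idx p n) (Idx p n) ℝ) (x : Idx p n → ℝ) :
    Matrix (Idx p n) (Idx p n) ℝ :=
  -(Tmat x * Matrix.diagonal x * A * Matrix.diagonal x * (Tmat x)ᵀ)

/-- A formal equilibrium of the polymatrix game `(n̲, A)`. -/
def FormalEq {p : ℕ} {n : Fin p → ℕ} (A : Matrix (Idx p n) (Idx p n) ℝ)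
    (q : Idx p n → ℝ) : Prop :=
  (∀ (α : Fin p) (i j : Fin (n α)), A.mulVec q ⟨α, i⟩ = A.mulVec q ⟨α, j⟩) ∧
  ∀ α : Fin p, ∑ j : Fin (n α), q ⟨α, j⟩ = 1

/-- If `A` is skew-symmetric and `q` a formal equilibrium of `(n̲,A)`, then
`H(x) = Σ_i q_i log x_i` is a constant of motion on `Γ°_n̲`: the derivative of `H`
along `X_{(n̲,A)}`, namely `Σ_i (q_i/x_i) X_{(n̲,A)}(x)_i`, vanishes. -/
theorem stmt11 {p : ℕ} {n : Fin p → ℕ} (hn : ∀ α, 0 < n α)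
    (A : Matrix (Idx p n) (Idx p n) ℝ) (hA : Aᵀ = -A)
    (q : Idx p n → ℝ) (hq : FormalEq A q)
    (x : Idx p n → ℝ) (hx : x ∈ GammaInt p n) :
    ∑ i : Idx p n, (q i / x i) * replicator A x i = 0 := by
  obtain ⟨hxpos, hxsum⟩ := hx
  obtain ⟨hqe, hqsum⟩ := hq
  have skew : ∀ v : Idx p n → ℝ, v ⬝ᵥ A.mulVec v = 0 := by
    intro v
    have h : v ⬝ᵥ A.mulVec v = -(v ⬝ᵥ A.mulVec v) := by
      calc v ⬝ᵥ A.mulVec v = A.vecMul v ⬝ᵥ v := by rw [Matrix.dotProduct_mulVec]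
        _ = Aᵀ.mulVec v ⬝ᵥ v := by rw [Matrix.mulVec_transpose]
        _ = -(v ⬝ᵥ A.mulVec v) := by
            rw [hA, Matrix.neg_mulVec, neg_dotProduct, dotProduct_comm]
    linarith
  set y := A.mulVec x with hy
  set z := A.mulVec q with hz
  have hterm : ∀ i : Idx p n, (q i / x i) * replicator A x i
      = q i * y i - q i * (∑ k : Fin (n i.1), x ⟨i.1, k⟩ * y ⟨i.1, k⟩) := by
    intro i
    have hxne : x i ≠ 0 := ne_of_gt (hxpos i)
    unfold replicator
    rw [← hy]
    field_simp
  rw [Finset.sum_congr rfl (fun i _ => hterm i), Finset.sum_sub_distrib]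
  have hsig : ∀ f : Idx p n → ℝ, ∑ i : Idx p n, f i = ∑ α : Fin p, ∑ k : Fin (n α), f ⟨α, k⟩ :=
    fun f => by rw [← Finset.univ_sigma_univ, Finset.sum_sigma]
  -- the second sum equals xᵀ A x = 0
  have hxy : ∑ i : Idx p n, x i * y i = 0 := skew x
  have h2 : ∑ i : Idx p n, q i * (∑ k : Fin (n i.1), x ⟨i.1, k⟩ * y ⟨i.1, k⟩) = 0 := by
    rw [hsig]
    have : ∀ α : Fin p, ∑ k : Fin (n α), q ⟨α, k⟩ * (∑ j : Fin (n α), x ⟨α, j⟩ * y ⟨α, j⟩)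
        = ∑ k : Fin (n α), x ⟨α, k⟩ * y ⟨α, k⟩ := by
      intro α
      rw [← Finset.sum_mul, hqsum α, one_mul]
    rw [Finset.sum_congr rfl (fun α _ => this α), ← hsig fun i => x i * y i]
    exact hxy
  rw [h2, sub_zero]
  -- first sum : q ⬝ y = -(x ⬝ z)
  have hqy : ∑ i : Idx p n, q i * y i = -(∑ i : Idx p n, x i * z i) := by
    have : q ⬝ᵥ A.mulVec x = Aᵀ.mulVec q ⬝ᵥ x := by
      rw [Matrix.dotProduct_mulVec, Matrix.mulVec_transpose]
    rw [hA, Matrix.neg_mulVec, neg_dotProduct, dotProduct_comm] at this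
    simpa [dotProduct, hy, hz, mul_comm] using this
  -- constant value of z on each group
  have hzconst : ∀ (α : Fin p) (k : Fin (n α)), z ⟨α, k⟩ = z ⟨α, ⟨0, hn α⟩⟩ :=
    fun α k => hqe α k ⟨0, hn α⟩
  have key : ∀ w : Idx p n → ℝ, (∀ α : Fin p, ∑ k : Fin (n α), w ⟨α, k⟩ = 1) →
      ∑ i : Idx p n, w i * z i = ∑ α : Fin p, z ⟨α, ⟨0, hn α⟩⟩ := by
    intro w hw
    rw [hsig]
    refine Finset.sum_congr rfl fun α _ => ?_
    calc ∑ k : Fin (n α), w ⟨α, k⟩ * z ⟨α, k⟩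
        = ∑ k : Fin (n α), w ⟨α, k⟩ * z ⟨α, ⟨0, hn α⟩⟩ := by
          exact Finset.sum_congr rfl fun k _ => by rw [hzconst α k]
      _ = (∑ k : Fin (n α), w ⟨α, k⟩) * z ⟨α, ⟨0, hn α⟩⟩ := by rw [Finset.sum_mul]
      _ = z ⟨α, ⟨0, hn α⟩⟩ := by rw [hw α, one_mul]
  have hqz : ∑ i : Idx p n, q i * z i = 0 := skew q
  rw [hqy, key x hxsum, ← key q hqsum, hqz, neg_zero]
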